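/- Let C be a category and W a class of morphisms satisfying CF1, CF2, CF3. Then any two connecting spans between fixed objects w : A → B and w' : A' → B of W are equivalent; that is, for any two spans (u, u') and (v, v') with w∘u = w'∘u' ∈ W and w∘v = w'∘v' ∈ W, there exist r, s with u∘r = v∘s, u'∘r = v'∘s, and w∘u∘r ∈ W. (Equivalently: the vertical arrow in C{W} between two objects with the same codomain is unique.) -/
import Mathlib


/-!
STATEMENT 2: For a category `C` and a class `W` satisfying CF1–CF3, any two
connecting spans between two fixed `W`-morphisms with common codomain are
equivalent (the vertical arrow of `C{W}` between two objects with the same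
codomain is unique).
-/

open CategoryTheory

universe v u

variable {C : Type u} [Category.{v} C]

/-- The Gabriel–Zisman (right) calculus of fractions conditions CF1–CF3. -/
structure FractionsCalculus (W : MorphismProperty C) : Prop where
  isos : ∀ {X Y : C} (f : X ⟶ Y), IsIso f → W f
  comp : ∀ {X Y Z : C} (f : X ⟶ Y) (g : Y ⟶ Z), W f → W g → W (f ≫ g)
  ore : ∀ {X A B : C} (f : X ⟶ B) (w : A ⟶ B), W w →
    ∃ (D : C) (fbar : D ⟶ A) (wbar : D ⟶ X), W wbar ∧ fbar ≫ w = wbar ≫ f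
  cancel : ∀ {A B X : C} (f g : A ⟶ B) (w : B ⟶ X), W w → f ≫ w = g ≫ w →
    ∃ (Y : C) (wt : Y ⟶ A), W wt ∧ wt ≫ f = wt ≫ g

/-- A connecting span between `w : A ⟶ B` and `w' : A' ⟶ B`. -/
structure ConnSpan (W : MorphismProperty C) {A A' B : C} (w : A ⟶ B) (w' : A' ⟶ B) where
  top : C
  u : top ⟶ A
  u' : top ⟶ A'
  comm : u ≫ w = u' ≫ w'
  mem : W (u ≫ w)

/-- Equivalence of connecting spans. -/
def SpanEquiv (W : MorphismProperty C) {A A' B : C} (w : A ⟶ B) (w' : A' ⟶ B)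
    (S T : ConnSpan W w w') : Prop :=
  ∃ (E : C) (r : E ⟶ S.top) (s : E ⟶ T.top),
    r ≫ S.u = s ≫ T.u ∧ r ≫ S.u' = s ≫ T.u' ∧ W (r ≫ S.u ≫ w)

theorem statement2 (W : MorphismProperty C) (hW : FractionsCalculus W)
    {A A' B : C} (w : A ⟶ B) (w' : A' ⟶ B) (hw : W w) (hw' : W w')
    (S T : ConnSpan W w w') :
    SpanEquiv W w w' S T := by
  obtain ⟨D, fbar, wbar, hwbar, hcomm⟩ := hW.ore (S.u ≫ w) (T.u ≫ w) T.mem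
  -- hcomm : fbar ≫ T.u ≫ w = wbar ≫ S.u ≫ w
  have h1 : (wbar ≫ S.u) ≫ w = (fbar ≫ T.u) ≫ w := by
    simpa [Category.assoc] using hcomm.symm
  obtain ⟨Y, t, ht, heq1⟩ := hW.cancel (wbar ≫ S.u) (fbar ≫ T.u) w hw h1
  have h2 : ((t ≫ wbar) ≫ S.u') ≫ w' = ((t ≫ fbar) ≫ T.u') ≫ w' := by
    have e1 : S.u ≫ w = S.u' ≫ w' := S.comm
    have e2 : T.u ≫ w = T.u' ≫ w' := T.comm
    calc ((t ≫ wbar) ≫ S.u') ≫ w' = t ≫ wbar ≫ (S.u' ≫ w') := by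
          simp [Category.assoc]
      _ = t ≫ wbar ≫ (S.u ≫ w) := by rw [e1]
      _ = (t ≫ (wbar ≫ S.u)) ≫ w := by simp [Category.assoc]
      _ = (t ≫ (fbar ≫ T.u)) ≫ w := by rw [heq1]
      _ = t ≫ fbar ≫ (T.u ≫ w) := by simp [Category.assoc]
      _ = t ≫ fbar ≫ (T.u' ≫ w') := by rw [e2]
      _ = ((t ≫ fbar) ≫ T.u') ≫ w' := by simp [Category.assoc]
  obtain ⟨Z, t', ht', heq2⟩ := hW.cancel ((t ≫ wbar) ≫ S.u') ((t ≫ fbar) ≫ T.u') w' hw' h2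
  refine ⟨Z, t' ≫ t ≫ wbar, t' ≫ t ≫ fbar, ?_, ?_, ?_⟩
  · have := heq1
    calc (t' ≫ t ≫ wbar) ≫ S.u = t' ≫ (t ≫ (wbar ≫ S.u)) := by simp [Category.assoc]
      _ = t' ≫ (t ≫ (fbar ≫ T.u)) := by rw [heq1]
      _ = (t' ≫ t ≫ fbar) ≫ T.u := by simp [Category.assoc]
  · calc (t' ≫ t ≫ wbar) ≫ S.u' = t' ≫ ((t ≫ wbar) ≫ S.u') := by simp [Category.assoc]
      _ = t' ≫ ((t ≫ fbar) ≫ T.u') := by rw [heq2]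
      _ = (t' ≫ t ≫ fbar) ≫ T.u' := by simp [Category.assoc]
  · have : (t' ≫ t ≫ wbar) ≫ S.u ≫ w = t' ≫ (t ≫ (wbar ≫ (S.u ≫ w))) := by
      simp [Category.assoc]
    rw [this]
    exact hW.comp _ _ ht' (hW.comp _ _ ht (hW.comp _ _ hwbar S.mem))
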